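/- Let n = 2m with m ≥ 2 and suppose i + j = m with 0 < i < j < m and gcd(n,i,j) = 1. Then gcd(i,j) = 1, and at least one of i, j is a unit of ℤ/nℤ; moreover if i is a unit then C_n(i,j) is isomorphic to C_{2m}(1, m-1). -/

import Mathlib

/-- The two-generator circulant graph `C_n(i,j)` on `ℤ/nℤ`:
distinct `a, b` are adjacent iff `a - b ∈ {i, -i, j, -j}`. -/
def circulant (n : ℕ) (i j : ZMod n) : SimpleGraph (ZMod n) where
  Adj a b := a ≠ b ∧ (a - b = i ∨ a - b = -i ∨ a - b = j ∨ a - b = -j)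
  symm := by
    constructor
    rintro a b ⟨hab, h⟩
    refine ⟨fun h' => hab h'.symm, ?_⟩
    have hba : b - a = -(a - b) := by ring
    rcases h with h | h | h | h <;> rw [hba, h] <;> simp
  loopless := by constructor; rintro a ⟨h, -⟩; exact h rfl

theorem stmt_16 (m i j : ℕ) (hm : 2 ≤ m) (hsum : i + j = m)
    (hi : 0 < i) (hij : i < j) (hj : j < m)
    (hgcd : Nat.gcd (2 * m) (Nat.gcd i j) = 1) :
    Nat.gcd i j = 1 ∧
    (IsUnit (i : ZMod (2 * m)) ∨ IsUnit (j : ZMod (2 * m))) ∧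
    (IsUnit (i : ZMod (2 * m)) →
      Nonempty (circulant (2 * m) (i : ZMod (2 * m)) (j : ZMod (2 * m)) ≃g
        circulant (2 * m) 1 ((m - 1 : ℕ) : ZMod (2 * m)))) := by
  haveI : NeZero (2 * m) := ⟨by omega⟩
  -- gcd i j = 1
  have hdvd : Nat.gcd i j ∣ 2 * m := by
    have h1 : Nat.gcd i j ∣ i + j :=
      Nat.dvd_add (Nat.gcd_dvd_left _ _) (Nat.gcd_dvd_right _ _)
    rw [hsum] at h1
    exact h1.mul_left 2
  have hgij : Nat.gcd i j = 1 :=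
    Nat.dvd_one.mp (by rw [← hgcd]; exact Nat.dvd_gcd hdvd dvd_rfl)
  -- coprimality facts
  have hcim : Nat.Coprime i m := by
    unfold Nat.Coprime
    rw [← hsum, Nat.gcd_self_add_right]
    exact hgij
  have hcjm : Nat.Coprime j m := by
    unfold Nat.Coprime
    rw [← hsum, Nat.gcd_add_self_right, Nat.gcd_comm]
    exact hgij
  -- odd numbers coprime to m are units
  have key : ∀ a : ℕ, Odd a → Nat.Coprime a m → IsUnit (a : ZMod (2 * m)) := by
    intro a ha hc
    rw [ZMod.isUnit_iff_coprime]
    have h2 : Nat.Coprime a 2 := Nat.coprime_two_right.mpr ha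
    exact Nat.Coprime.mul_right h2 hc
  -- not both i and j even
  have hodd : Odd i ∨ Odd j := by
    by_contra h
    push_neg at h
    rw [Nat.not_odd_iff_even, Nat.not_odd_iff_even] at h
    obtain ⟨⟨a, ha⟩, ⟨b, hb⟩⟩ := h
    have : (2 : ℕ) ∣ Nat.gcd i j := Nat.dvd_gcd ⟨a, by omega⟩ ⟨b, by omega⟩
    omega
  refine ⟨hgij, ?_, ?_⟩
  · rcases hodd with h | h
    · exact Or.inl (key i h hcim)
    · exact Or.inr (key j h hcjm)
  · intro h
    -- i is odd since it's a unit mod 2m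
    have hio : Odd i := by
      have hc : Nat.Coprime i (2 * m) := (ZMod.isUnit_iff_coprime i (2 * m)).mp h
      rcases Nat.even_or_odd i with he | ho
      · exfalso
        obtain ⟨a, ha⟩ := he
        have h2 : (2 : ℕ) ∣ Nat.gcd i (2 * m) := Nat.dvd_gcd ⟨a, by omega⟩ ⟨m, rfl⟩
        rw [hc] at h2; omega
      · exact ho
    obtain ⟨k, hk⟩ := hio
    set N := 2 * m with hN
    -- key multiplicative identities in ZMod N
    have h2m0 : ((2 * m : ℕ) : ZMod N) = 0 := ZMod.natCast_self N
    have hcastsum : ((i : ℕ) : ZMod N) + (j : ℕ) = (m : ℕ) := by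
      exact_mod_cast congrArg (Nat.cast : ℕ → ZMod N) hsum
    have hik : ((i : ℕ) : ZMod N) = 2 * (k : ZMod N) + 1 := by
      exact_mod_cast congrArg (Nat.cast : ℕ → ZMod N) hk
    have hm1 : ((m - 1 : ℕ) : ZMod N) = ((m : ℕ) : ZMod N) - 1 := by
      have h1 : (1 : ℕ) ≤ m := by omega
      push_cast [h1]
      ring
    have h2m0' : (2 : ZMod N) * ((m : ℕ) : ZMod N) = 0 := by
      push_cast at h2m0
      exact h2m0
    have hkey : ((i : ℕ) : ZMod N) * ((m - 1 : ℕ) : ZMod N) = ((j : ℕ) : ZMod N) := by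
      rw [hm1]
      linear_combination ((m : ℕ) : ZMod N) * hik - hcastsum + (k : ZMod N) * h2m0'
    -- the unit and its inverse
    set u : (ZMod N)ˣ := h.unit with hu
    have hus : (u : ZMod N) = (i : ℕ) := h.unit_spec
    have hvu : ((u⁻¹ : (ZMod N)ˣ) : ZMod N) * (u : ZMod N) = 1 := u.inv_mul
    have huv : (u : ZMod N) * ((u⁻¹ : (ZMod N)ˣ) : ZMod N) = 1 := u.mul_inv
    set v : ZMod N := ((u⁻¹ : (ZMod N)ˣ) : ZMod N) with hv
    -- the linear equivalence x ↦ v * x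
    have hcancel : ∀ x : ZMod N, (u : ZMod N) * (v * x) = x := by
      intro x; rw [← mul_assoc, huv, one_mul]
    have hcancel' : ∀ x : ZMod N, v * ((u : ZMod N) * x) = x := by
      intro x; rw [← mul_assoc, hvu, one_mul]
    refine ⟨⟨⟨fun x => v * x, fun x => (u : ZMod N) * x, hcancel, hcancel'⟩, ?_⟩⟩
    intro a b
    have hiff : ∀ x c : ZMod N, v * x = c ↔ x = (u : ZMod N) * c := by
      intro x c
      constructor
      · rintro rfl; exact (hcancel x).symm
      · rintro rfl; exact hcancel' c
    simp only [circulant, Equiv.coe_fn_mk, ne_eq]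
    constructor
    · rintro ⟨hne, hd⟩
      refine ⟨fun hab => hne (by rw [hab]), ?_⟩
      have hsub : v * a - v * b = v * (a - b) := by ring
      rw [hsub] at hd
      rcases hd with hc | hc | hc | hc
      · left; rw [(hiff _ _).mp hc, mul_one, hus]
      · right; left
        rw [(hiff _ _).mp hc]
        rw [show (u : ZMod N) * (-1) = -((u : ZMod N) * 1) by ring, mul_one, hus]
      · right; right; left
        rw [(hiff _ _).mp hc, hus, hkey]
      · right; right; right
        rw [(hiff _ _).mp hc]
        rw [show (u : ZMod N) * (-((m - 1 : ℕ) : ZMod N)) = -((u : ZMod N) * ((m - 1 : ℕ) : ZMod N)) by ring, hus, hkey]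
    · rintro ⟨hne, hd⟩
      refine ⟨fun hab => hne ?_, ?_⟩
      · have := congrArg (fun x => (u : ZMod N) * x) hab
        simpa [hcancel] using this
      · have hsub : v * a - v * b = v * (a - b) := by ring
        rw [hsub]
        rcases hd with hc | hc | hc | hc
        · left; rw [hiff, mul_one, hus]; exact hc
        · right; left
          rw [hiff, show (u : ZMod N) * (-1) = -((u : ZMod N) * 1) by ring, mul_one, hus]
          exact hc
        · right; right; left
          rw [hiff, hus, hkey]; exact hc
        · right; right; right
          rw [hiff, show (u : ZMod N) * (-((m - 1 : ℕ) : ZMod N)) = -((u : ZMod N) * ((m - 1 : ℕ) : ZMod N)) by ring, hus, hkey]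
          exact hc
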